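/- Let A be a T-brace whose additive group (A,+) is torsion-free. If A is ⋆-hypercentral, then A is abelian, i.e., a ⋆ b = 0 for all a,b ∈ A. -/

import Mathlib

/-!
Basic theory of left braces (skew left braces of abelian type), following
Dixon–Kurdachenko–Subbotin, "On the structure of braces whose subideals are ideals".
-/

universe u v

/-- A left brace: an abelian group `(A,+)`, a group `(A,·)`, satisfying
`a(b+c) = ab + ac - a`.  (The additive and multiplicative identities then coincide.) -/
class LeftBrace (A : Type u) extends AddCommGroup A, Group A where
  mul_add_eq : ∀ a b c : A, a * (b + c) = a * b + a * c - a

namespace LeftBrace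

variable {A : Type u} [LeftBrace A]

/-- The star operation `a ⋆ b = ab - a - b`. -/
def bstar (a b : A) : A := a * b - a - b

/-- A subset of a left brace is a subbrace if it is closed under the additive-group
and multiplicative-group operations (equivalently, it is a left brace under the
restricted operations). -/
structure IsSubbrace (S : Set A) : Prop where
  zero_mem : (0 : A) ∈ S
  add_mem : ∀ {a b : A}, a ∈ S → b ∈ S → a + b ∈ S
  neg_mem : ∀ {a : A}, a ∈ S → -a ∈ S
  mul_mem : ∀ {a b : A}, a ∈ S → b ∈ S → a * b ∈ S
  inv_mem : ∀ {a : A}, a ∈ S → a⁻¹ ∈ S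

/-- `I` is an ideal of the subbrace `J`: `I ⊆ J`, both are subbraces, and
`a ⋆ z, z ⋆ a ∈ I` for all `a ∈ J`, `z ∈ I`. -/
structure IsIdealIn (I J : Set A) : Prop where
  subset : I ⊆ J
  subbrace : IsSubbrace I
  ambient_subbrace : IsSubbrace J
  star_mem_left : ∀ a ∈ J, ∀ z ∈ I, bstar a z ∈ I
  star_mem_right : ∀ a ∈ J, ∀ z ∈ I, bstar z a ∈ I

/-- `I` is an ideal of the brace `A`. -/
def IsIdeal (I : Set A) : Prop := IsIdealIn I (Set.univ : Set A)

/-- `A` is a T-brace if being an ideal is a transitive relation: an ideal of an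
ideal of `A` is an ideal of `A`. -/
def IsTBrace (A : Type u) [LeftBrace A] : Prop :=
  ∀ I J : Set A, IsIdealIn I J → IsIdeal J → IsIdeal I

/-- The `⋆`-center `ζ(⋆,A) = {a | a ⋆ x = x ⋆ a = 0 for all x}`. -/
def starCenter (A : Type u) [LeftBrace A] : Set A :=
  {a : A | ∀ x : A, bstar a x = 0 ∧ bstar x a = 0}

/-- The preimage in `A` of the `⋆`-center of the quotient of `A` by (the ideal) `S`:
`a` belongs to it iff `a ⋆ x ∈ S` and `x ⋆ a ∈ S` for every `x ∈ A`. -/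
def nextCenter (A : Type u) [LeftBrace A] (S : Set A) : Set A :=
  {a : A | ∀ x : A, bstar a x ∈ S ∧ bstar x a ∈ S}

/-- The upper `⋆`-central series, indexed by naturals:
`ζ₀(⋆,A) = 0` and `ζ_{n+1}(⋆,A)/ζ_n(⋆,A) = ζ(⋆, A/ζ_n(⋆,A))`. -/
def zetaNat (A : Type u) [LeftBrace A] : ℕ → Set A
  | 0 => ({0} : Set A)
  | n + 1 => nextCenter A (zetaNat A n)

/-- The upper `⋆`-central series, indexed by ordinals (unions at limit ordinals). -/
noncomputable def zetaOrd (A : Type u) [LeftBrace A] (o : Ordinal.{v}) : Set A :=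
  Ordinal.limitRecOn o (({0} : Set A))
    (fun _ ih => nextCenter A ih)
    (fun o _ ih => ⋃ (o' : Ordinal) (h : o' < o), ih o' h)

/-- The upper `⋆`-hypercenter `ζ_∞(⋆,A)`: the final (stable) term of the upper
`⋆`-central series, i.e. the union of all its terms. -/
noncomputable def starHypercenter (A : Type u) [LeftBrace A] : Set A :=
  ⋃ o : Ordinal.{u}, zetaOrd A o

/-- `A` is `⋆`-hypercentral if `A = ζ_γ(⋆,A)` for some ordinal `γ`. -/
def IsStarHypercentral (A : Type u) [LeftBrace A] : Prop :=
  ∃ γ : Ordinal.{u}, zetaOrd A γ = (Set.univ : Set A)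

/-- `K ⋆ L`: the additive subgroup of `(A,+)` generated by all `x ⋆ y`, `x ∈ K`, `y ∈ L`. -/
def setStar (K L : Set A) : AddSubgroup A :=
  AddSubgroup.closure {z : A | ∃ x ∈ K, ∃ y ∈ L, z = bstar x y}

/-- `rightStarSeries A n = A^{(n+1)}`, where `A^{(1)} = A` and `A^{(n+1)} = A^{(n)} ⋆ A`. -/
def rightStarSeries (A : Type u) [LeftBrace A] : ℕ → Set A
  | 0 => (Set.univ : Set A)
  | n + 1 => ((setStar (rightStarSeries A n) (Set.univ : Set A) : AddSubgroup A) : Set A)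

/-- `leftStarSeries A n = A^{n+1}`, where `A^1 = A` and `A^{n+1} = A ⋆ A^n`. -/
def leftStarSeries (A : Type u) [LeftBrace A] : ℕ → Set A
  | 0 => (Set.univ : Set A)
  | n + 1 => ((setStar (Set.univ : Set A) (leftStarSeries A n) : AddSubgroup A) : Set A)

/-- `A` is Smoktunowicz-nilpotent if `A^{(n)} = A^k = 0` for some naturals `n, k`. -/
def IsSmoktunowiczNilpotent (A : Type u) [LeftBrace A] : Prop :=
  ∃ n k : ℕ, rightStarSeries A n = ({0} : Set A) ∧ leftStarSeries A k = ({0} : Set A)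

/-- The subbrace generated by a subset `M`: the intersection of all subbraces containing `M`. -/
def braceClosure (M : Set A) : Set A := ⋂₀ {S : Set A | IsSubbrace S ∧ M ⊆ S}

end LeftBrace

namespace LeftBrace

variable {A : Type u} [LeftBrace A]

lemma mul_zero'' (a : A) : a * 0 = a := by
  have h := mul_add_eq a 0 0
  rw [add_zero, add_sub_assoc] at h
  exact sub_eq_zero.mp (left_eq_add.mp h)

lemma one_eq_zero' : (1 : A) = 0 := by
  have h := mul_zero'' (1 : A)
  rw [one_mul] at h
  exact h.symm

lemma mul_eq' (a b : A) : a * b = bstar a b + a + b := by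
  simp only [bstar]; abel

lemma bstar_add_right (a b c : A) : bstar a (b + c) = bstar a b + bstar a c := by
  simp only [bstar]
  rw [mul_add_eq]
  abel

lemma bstar_zero_right (a : A) : bstar a 0 = 0 := by
  simp [bstar, mul_zero'']

lemma bstar_zero_left (a : A) : bstar 0 a = 0 := by
  have h : (0 : A) * a = a := by rw [← one_eq_zero', one_mul]
  simp [bstar, h]

lemma bstar_mul_left (a b c : A) :
    bstar (a * b) c = bstar a (bstar b c) + bstar b c + bstar a c := by
  have h : a * (b * c) = a * bstar b c + (a * b + a * c - a) - a := by
    conv_lhs => rw [mul_eq' b c, add_assoc]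
    rw [mul_add_eq, mul_add_eq]
  simp only [bstar, mul_assoc, h]
  abel

lemma bstar_neg_right (a b : A) : bstar a (-b) = -bstar a b := by
  have h := bstar_add_right a b (-b)
  rw [add_neg_cancel, bstar_zero_right] at h
  exact eq_neg_of_add_eq_zero_right h.symm

lemma bstar_nsmul_right (a b : A) (n : ℕ) : bstar a (n • b) = n • bstar a b := by
  induction n with
  | zero => simp [bstar_zero_right]
  | succ k ih => rw [succ_nsmul, bstar_add_right, ih, succ_nsmul]

lemma bstar_zsmul_right (a b : A) (n : ℤ) : bstar a (n • b) = n • bstar a b := by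
  obtain ⟨m, rfl | rfl⟩ := Int.eq_nat_or_neg n
  · rw [natCast_zsmul, natCast_zsmul, bstar_nsmul_right]
  · rw [neg_zsmul, neg_zsmul, natCast_zsmul, natCast_zsmul, bstar_neg_right,
      bstar_nsmul_right]

lemma inv_eq' (u : A) : u⁻¹ = -u - bstar u u⁻¹ := by
  have h := mul_eq' u u⁻¹
  rw [mul_inv_cancel, one_eq_zero'] at h
  have h2 : u⁻¹ = -(bstar u u⁻¹ + u) := eq_neg_of_add_eq_zero_right h.symm
  conv_lhs => rw [h2]
  abel

lemma zero_mem_sC : (0 : A) ∈ starCenter A :=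
  fun x => ⟨bstar_zero_left x, bstar_zero_right x⟩

lemma sC_mul_eq_add {s : A} (hs : s ∈ starCenter A) (w : A) : s * w = s + w := by
  have h := mul_eq' s w
  rw [(hs w).1] at h
  rw [h]; abel

lemma bstar_sCmul_left {s : A} (hs : s ∈ starCenter A) (w x : A) :
    bstar (s * w) x = bstar w x := by
  rw [bstar_mul_left, (hs (bstar w x)).1, (hs x).1]
  abel

lemma sC_inv {s : A} (hs : s ∈ starCenter A) : s⁻¹ = -s := by
  rw [inv_eq', (hs s⁻¹).1]; abel

lemma neg_mem_sC {s : A} (hs : s ∈ starCenter A) : -s ∈ starCenter A := by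
  intro x
  constructor
  · rw [← sC_inv hs]
    have h := bstar_mul_left s s⁻¹ x
    rw [mul_inv_cancel, one_eq_zero', bstar_zero_left, (hs (bstar s⁻¹ x)).1,
      (hs x).1] at h
    simpa using h.symm
  · rw [bstar_neg_right, (hs x).2, neg_zero]

lemma sC_subset_nC : starCenter A ⊆ nextCenter A (starCenter A) := by
  intro s hs x
  exact ⟨by rw [(hs x).1]; exact zero_mem_sC, by rw [(hs x).2]; exact zero_mem_sC⟩

lemma add_star {u v : A} (hu : u ∈ nextCenter A (starCenter A))
    (hv : v ∈ nextCenter A (starCenter A)) (x : A) :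
    bstar (u + v) x = bstar u x + bstar v x := by
  have hrep : u + v = (-(bstar u v)) * (u * v) := by
    rw [sC_mul_eq_add (neg_mem_sC ((hu v).1)), mul_eq' u v]; abel
  rw [hrep, bstar_sCmul_left (neg_mem_sC ((hu v).1)), bstar_mul_left,
    (((hv x).1) u).2]
  abel

lemma add_mem_sC {z w : A} (hz : z ∈ starCenter A) (hw : w ∈ starCenter A) :
    z + w ∈ starCenter A := by
  intro x
  refine ⟨?_, ?_⟩
  · rw [add_star (sC_subset_nC hz) (sC_subset_nC hw), (hz x).1, (hw x).1, add_zero]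
  · rw [bstar_add_right, (hz x).2, (hw x).2, add_zero]

lemma inv_bstar_mem {u : A} (hu : u ∈ nextCenter A (starCenter A)) (x : A) :
    bstar u⁻¹ x ∈ starCenter A := by
  have h := bstar_mul_left u u⁻¹ x
  rw [mul_inv_cancel, one_eq_zero', bstar_zero_left] at h
  have hZ : bstar u⁻¹ x = -(bstar u (bstar u⁻¹ x) + bstar u x) +
      (bstar u (bstar u⁻¹ x) + bstar u⁻¹ x + bstar u x) := by abel
  rw [← h, add_zero] at hZ
  rw [hZ]
  exact neg_mem_sC (add_mem_sC ((hu _).1) ((hu x).1))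

lemma neg_mem_nC {u : A} (hu : u ∈ nextCenter A (starCenter A)) :
    -u ∈ nextCenter A (starCenter A) := by
  intro x
  constructor
  · have hrep : -u = (bstar u u⁻¹) * u⁻¹ := by
      rw [sC_mul_eq_add ((hu u⁻¹).1)]
      have h : bstar u u⁻¹ + u⁻¹ = -u := by
        simp only [bstar]
        rw [mul_inv_cancel, one_eq_zero']
        abel
      exact h.symm
    rw [hrep, bstar_sCmul_left ((hu u⁻¹).1)]
    exact inv_bstar_mem hu x
  · rw [bstar_neg_right]
    exact neg_mem_sC ((hu x).2)

lemma add_mem_nC {u v : A} (hu : u ∈ nextCenter A (starCenter A))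
    (hv : v ∈ nextCenter A (starCenter A)) :
    u + v ∈ nextCenter A (starCenter A) := by
  intro x
  constructor
  · rw [add_star hu hv]
    exact add_mem_sC ((hu x).1) ((hv x).1)
  · rw [bstar_add_right]
    exact add_mem_sC ((hu x).2) ((hv x).2)

lemma neg_star {u : A} (hu : u ∈ nextCenter A (starCenter A)) (x : A) :
    bstar (-u) x = -bstar u x := by
  have h := add_star hu (neg_mem_nC hu) x
  rw [add_neg_cancel, bstar_zero_left] at h
  exact eq_neg_of_add_eq_zero_right h.symm

lemma nsmul_mem_nC {u : A} (hu : u ∈ nextCenter A (starCenter A)) (n : ℕ) :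
    n • u ∈ nextCenter A (starCenter A) := by
  induction n with
  | zero => rw [zero_nsmul]; exact sC_subset_nC zero_mem_sC
  | succ k ih => rw [succ_nsmul]; exact add_mem_nC ih hu

lemma nsmul_star {u : A} (hu : u ∈ nextCenter A (starCenter A)) (n : ℕ) (x : A) :
    bstar (n • u) x = n • bstar u x := by
  induction n with
  | zero => rw [zero_nsmul, zero_nsmul, bstar_zero_left]
  | succ k ih => rw [succ_nsmul, add_star (nsmul_mem_nC hu k) hu, ih, succ_nsmul]

lemma zsmul_mem_nC {u : A} (hu : u ∈ nextCenter A (starCenter A)) (n : ℤ) :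
    n • u ∈ nextCenter A (starCenter A) := by
  obtain ⟨m, rfl | rfl⟩ := Int.eq_nat_or_neg n
  · rw [natCast_zsmul]; exact nsmul_mem_nC hu m
  · rw [neg_zsmul, natCast_zsmul]; exact neg_mem_nC (nsmul_mem_nC hu m)

lemma zsmul_star {u : A} (hu : u ∈ nextCenter A (starCenter A)) (n : ℤ) (x : A) :
    bstar (n • u) x = n • bstar u x := by
  obtain ⟨m, rfl | rfl⟩ := Int.eq_nat_or_neg n
  · rw [natCast_zsmul, natCast_zsmul, nsmul_star hu]
  · rw [neg_zsmul, neg_zsmul, natCast_zsmul, natCast_zsmul,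
      neg_star (nsmul_mem_nC hu m), nsmul_star hu]

lemma zsmul_mem_sC {s : A} (hs : s ∈ starCenter A) (n : ℤ) :
    n • s ∈ starCenter A := by
  intro x
  constructor
  · rw [zsmul_star (sC_subset_nC hs), (hs x).1, smul_zero]
  · rw [bstar_zsmul_right, (hs x).2, smul_zero]

lemma mul_mem_nC {u v : A} (hu : u ∈ nextCenter A (starCenter A))
    (hv : v ∈ nextCenter A (starCenter A)) :
    u * v ∈ nextCenter A (starCenter A) := by
  intro x
  constructor
  · rw [bstar_mul_left, (((hv x).1) u).2, zero_add]
    exact add_mem_sC ((hv x).1) ((hu x).1)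
  · rw [mul_eq' u v, bstar_add_right, bstar_add_right, (((hu v).1) x).2, zero_add]
    exact add_mem_sC ((hu x).2) ((hv x).2)

lemma decomp_left {b s : A} (hb : b ∈ nextCenter A (starCenter A))
    (hs : s ∈ starCenter A) (n : ℤ) (x : A) :
    bstar (n • b + s) x = n • bstar b x := by
  rw [add_star (zsmul_mem_nC hb n) (sC_subset_nC hs), zsmul_star hb, (hs x).1,
    add_zero]

lemma decomp_right {b s : A} (hb : b ∈ nextCenter A (starCenter A))
    (hs : s ∈ starCenter A) (n : ℤ) (x : A) :
    bstar x (n • b + s) = n • bstar x b := by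
  rw [bstar_add_right, bstar_zsmul_right, (hs x).2, add_zero]

lemma tf_zsmul (hfree : ∀ a : A, a ≠ 0 → ¬ IsOfFinAddOrder a)
    {n : ℤ} (hn : n ≠ 0) {y : A} (h : n • y = 0) : y = 0 := by
  by_contra hy
  refine hfree y hy ?_
  rw [isOfFinAddOrder_iff_nsmul_eq_zero]
  refine ⟨n.natAbs, Int.natAbs_pos.mpr hn, ?_⟩
  obtain ⟨m, rfl | rfl⟩ := Int.eq_nat_or_neg n
  · rw [natCast_zsmul] at h
    simpa using h
  · rw [neg_zsmul, neg_eq_zero, natCast_zsmul] at h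
    simpa using h

lemma mem_sC_of_zsmul (hfree : ∀ a : A, a ≠ 0 → ¬ IsOfFinAddOrder a)
    {b : A} (hb : b ∈ nextCenter A (starCenter A)) {n : ℤ} (hn : n ≠ 0)
    (h : n • b ∈ starCenter A) : b ∈ starCenter A := by
  intro x
  constructor
  · have h1 : n • bstar b x = 0 := by rw [← zsmul_star hb]; exact (h x).1
    exact tf_zsmul hfree hn h1
  · have h1 : n • bstar x b = 0 := by rw [← bstar_zsmul_right]; exact (h x).2
    exact tf_zsmul hfree hn h1

lemma univ_subbrace : IsSubbrace (Set.univ : Set A) :=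
  ⟨trivial, fun _ _ => trivial, fun _ => trivial, fun _ _ => trivial,
    fun _ => trivial⟩

lemma key (hT : IsTBrace A) (hfree : ∀ a : A, a ≠ 0 → ¬ IsOfFinAddOrder a)
    {b : A} (hb : b ∈ nextCenter A (starCenter A)) (x : A) :
    (∃ m : ℤ, bstar x b = m • bstar b b) ∧
      (∃ m : ℤ, bstar b x = m • bstar b b) := by
  by_cases hb1 : b ∈ starCenter A
  · exact ⟨⟨0, by rw [(hb1 x).2, zero_smul]⟩, ⟨0, by rw [(hb1 x).1, zero_smul]⟩⟩
  set c := bstar b b with hc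
  have hcs : c ∈ starCenter A := (hb b).1
  set J : Set A := {y | ∃ (n : ℤ) (s : A), s ∈ starCenter A ∧ y = n • b + s}
    with hJdef
  set I : Set A := {y | ∃ n m : ℤ, y = n • b + m • c} with hIdef
  have hIJ' : I ⊆ J := by
    rintro y ⟨n, m, rfl⟩
    exact ⟨n, m • c, zsmul_mem_sC hcs m, rfl⟩
  have hJZ2 : ∀ y ∈ J, y ∈ nextCenter A (starCenter A) := by
    rintro y ⟨n, s, hs, rfl⟩
    exact add_mem_nC (zsmul_mem_nC hb n) (sC_subset_nC hs)
  -- subbrace structure on J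
  have hJsub : IsSubbrace J := by
    constructor
    · exact ⟨0, 0, zero_mem_sC, by simp⟩
    · rintro _ _ ⟨n, s, hs, rfl⟩ ⟨n', s', hs', rfl⟩
      exact ⟨n + n', s + s', add_mem_sC hs hs', by rw [add_zsmul]; abel⟩
    · rintro _ ⟨n, s, hs, rfl⟩
      exact ⟨-n, -s, neg_mem_sC hs, by rw [neg_zsmul]; abel⟩
    · rintro _ _ ⟨n, s, hs, rfl⟩ ⟨n', s', hs', rfl⟩
      have h1 : bstar (n • b + s) (n' • b + s') = n' • (n • c) := by
        rw [decomp_right hb hs', decomp_left hb hs]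
      refine ⟨n + n', n' • (n • c) + s + s', ?_, ?_⟩
      · exact add_mem_sC (add_mem_sC (zsmul_mem_sC (zsmul_mem_sC hcs n) n') hs) hs'
      · rw [mul_eq', h1, add_zsmul]; abel
    · rintro _ ⟨n, s, hs, rfl⟩
      have ht : bstar (n • b + s) (n • b + s)⁻¹ ∈ starCenter A :=
        ((hJZ2 _ ⟨n, s, hs, rfl⟩) _).1
      obtain ⟨t, ht'⟩ : ∃ t, bstar (n • b + s) (n • b + s)⁻¹ = t := ⟨_, rfl⟩
      rw [ht'] at ht
      refine ⟨-n, -s + -t, add_mem_sC (neg_mem_sC hs) (neg_mem_sC ht), ?_⟩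
      have h := inv_eq' (n • b + s)
      rw [ht'] at h
      rw [h, neg_zsmul]
      abel
  have hJideal : IsIdeal J := by
    refine ⟨Set.subset_univ _, hJsub, univ_subbrace, ?_, ?_⟩
    · rintro a - _ ⟨n, s, hs, rfl⟩
      refine ⟨0, n • bstar a b, zsmul_mem_sC ((hb a).2) n, ?_⟩
      rw [decomp_right hb hs, zero_zsmul, zero_add]
    · rintro a - _ ⟨n, s, hs, rfl⟩
      refine ⟨0, n • bstar b a, zsmul_mem_sC ((hb a).1) n, ?_⟩
      rw [decomp_left hb hs, zero_zsmul, zero_add]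
  have hIsub : IsSubbrace I := by
    constructor
    · exact ⟨0, 0, by simp⟩
    · rintro _ _ ⟨n, m, rfl⟩ ⟨n', m', rfl⟩
      exact ⟨n + n', m + m', by rw [add_zsmul, add_zsmul]; abel⟩
    · rintro _ ⟨n, m, rfl⟩
      exact ⟨-n, -m, by rw [neg_zsmul, neg_zsmul]; abel⟩
    · rintro _ _ ⟨n, m, rfl⟩ ⟨n', m', rfl⟩
      have h1 : bstar (n • b + m • c) (n' • b + m' • c) = (n' * n) • c := by
        rw [decomp_right hb (zsmul_mem_sC hcs m'),
          decomp_left hb (zsmul_mem_sC hcs m), smul_smul]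
      refine ⟨n + n', m + m' + n' * n, ?_⟩
      rw [mul_eq', h1, add_zsmul, add_zsmul, add_zsmul]
      abel
    · rintro u ⟨n, m, rfl⟩
      obtain ⟨k, s, hs, hks⟩ := hJsub.inv_mem (hIJ' ⟨n, m, rfl⟩)
      have h1 : bstar (n • b + m • c) (n • b + m • c)⁻¹ = (k * n) • c := by
        rw [hks, decomp_right hb hs, decomp_left hb (zsmul_mem_sC hcs m),
          smul_smul]
      refine ⟨-n, -m - k * n, ?_⟩
      have h := inv_eq' (n • b + m • c)
      rw [h1] at h
      rw [h, neg_zsmul, sub_zsmul, neg_zsmul]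
      abel
  have hII : IsIdealIn I J := by
    refine ⟨hIJ', hIsub, hJsub, ?_, ?_⟩
    · rintro _ ⟨k, s, hs, rfl⟩ _ ⟨n, m, rfl⟩
      refine ⟨0, n * k, ?_⟩
      rw [decomp_right hb (zsmul_mem_sC hcs m), decomp_left hb hs, smul_smul,
        zero_zsmul, zero_add]
    · rintro _ ⟨k, s, hs, rfl⟩ _ ⟨n, m, rfl⟩
      refine ⟨0, k * n, ?_⟩
      rw [decomp_right hb hs, decomp_left hb (zsmul_mem_sC hcs m), smul_smul,
        zero_zsmul, zero_add]
  have hIideal : IsIdeal I := hT I J hII hJideal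
  have hbI : b ∈ I := ⟨1, 0, by simp⟩
  constructor
  · obtain ⟨n, m, hnm⟩ := hIideal.star_mem_left x (Set.mem_univ x) b hbI
    rcases eq_or_ne n 0 with rfl | hn
    · exact ⟨m, by rw [hnm, zero_zsmul, zero_add]⟩
    · exfalso
      refine hb1 (mem_sC_of_zsmul hfree hb hn ?_)
      have : n • b = bstar x b + -(m • c) := by rw [hnm]; abel
      rw [this]
      exact add_mem_sC ((hb x).2) (neg_mem_sC (zsmul_mem_sC hcs m))
  · obtain ⟨n, m, hnm⟩ := hIideal.star_mem_right x (Set.mem_univ x) b hbI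
    rcases eq_or_ne n 0 with rfl | hn
    · exact ⟨m, by rw [hnm, zero_zsmul, zero_add]⟩
    · exfalso
      refine hb1 (mem_sC_of_zsmul hfree hb hn ?_)
      have : n • b = bstar b x + -(m • c) := by rw [hnm]; abel
      rw [this]
      exact add_mem_sC ((hb x).1) (neg_mem_sC (zsmul_mem_sC hcs m))

lemma nC_subset_sC (hT : IsTBrace A)
    (hfree : ∀ a : A, a ≠ 0 → ¬ IsOfFinAddOrder a) :
    nextCenter A (starCenter A) ⊆ starCenter A := by
  intro a ha
  have hc0 : bstar a a = 0 := by
    by_contra hcne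
    have ha' : a * a ∈ nextCenter A (starCenter A) := mul_mem_nC ha ha
    have haa' : bstar a (a * a) = (2 : ℤ) • bstar a a := by
      rw [mul_eq' a a, bstar_add_right, bstar_add_right, (((ha a).1) a).2,
        zero_add, two_zsmul]
    have ha'a' : bstar (a * a) (a * a) = (4 : ℤ) • bstar a a := by
      rw [bstar_mul_left, (((ha (a * a)).1) a).2, zero_add, haa', ← add_zsmul]
      norm_num
    obtain ⟨⟨m, hm⟩, -⟩ := key hT hfree ha' a
    rw [haa', ha'a', smul_smul] at hm
    have h0 : ((2 : ℤ) - m * 4) • bstar a a = 0 := by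
      rw [sub_zsmul, hm]
      abel
    exact hcne (tf_zsmul hfree (by omega) h0)
  intro x
  obtain ⟨⟨m1, h1⟩, ⟨m2, h2⟩⟩ := key hT hfree ha x
  rw [hc0, smul_zero] at h1 h2
  exact ⟨h2, h1⟩

lemma nextCenter_mono {S T : Set A} (h : S ⊆ T) :
    nextCenter A S ⊆ nextCenter A T :=
  fun _ ha x => ⟨h (ha x).1, h (ha x).2⟩

lemma zetaOrd_subset_sC (hT : IsTBrace A)
    (hfree : ∀ a : A, a ≠ 0 → ¬ IsOfFinAddOrder a) (o : Ordinal.{v}) :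
    zetaOrd A o ⊆ starCenter A := by
  induction o using Ordinal.limitRecOn with
  | zero =>
    have z0 : zetaOrd A (0 : Ordinal) = ({0} : Set A) :=
      Ordinal.limitRecOn_zero _ _ _
    rw [z0]
    intro y hy
    rw [Set.mem_singleton_iff] at hy
    rw [hy]
    exact zero_mem_sC
  | add_one o ih =>
    have zs : zetaOrd A (o + 1) = nextCenter A (zetaOrd A o) :=
      Ordinal.limitRecOn_add_one _ _ _ _
    rw [zs]
    exact (nextCenter_mono ih).trans (nC_subset_sC hT hfree)
  | limit o hlim ih =>
    have zl : zetaOrd A o = ⋃ (o' : Ordinal) (_ : o' < o), zetaOrd A o' :=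
      Ordinal.limitRecOn_limit _ _ _ _ hlim
    rw [zl]
    exact Set.iUnion₂_subset ih

end LeftBrace

open LeftBrace in
/-- **Corollary 1.** A `⋆`-hypercentral T-brace with torsion-free additive group is abelian. -/
theorem abelian_of_isStarHypercentral_of_torsionFree
    {A : Type u} [LeftBrace A] (hT : IsTBrace A)
    (hfree : ∀ a : A, a ≠ 0 → ¬ IsOfFinAddOrder a)
    (hhc : IsStarHypercentral A) :
    ∀ a b : A, bstar a b = 0 := by
  intro a b
  obtain ⟨γ, hγ⟩ := hhc
  have hsub := zetaOrd_subset_sC hT hfree γ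
  rw [hγ] at hsub
  exact (hsub (Set.mem_univ a) b).1
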